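/- Let p be a permutation vector of size n, partitioned as p = (p_T; p_B) with p_T of size k. Then the accumulated permutation matrix satisfies P(p) = diag(I_k, P(p_B)) · P(p_T), where P(p_T) acts on all m coordinates. -/

import Mathlib

open Matrix

/-- The permutation matrix of `σ`: entry `(i, j)` is `1` iff `i = σ j`. -/
def permMat {m : ℕ} (σ : Equiv.Perm (Fin m)) : Matrix (Fin m) (Fin m) ℝ :=
  Matrix.of fun i j => if σ j = i then (1 : ℝ) else 0

/-- The `m × m` transposition matrix swapping indices `a` and `b`
(the identity if `a` or `b` is out of range). -/
def swapMat (m a b : ℕ) : Matrix (Fin m) (Fin m) ℝ :=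
  if h : a < m ∧ b < m then permMat (Equiv.swap ⟨a, h.1⟩ ⟨b, h.2⟩) else 1

/-- The accumulated permutation matrix `P(p)` of a permutation vector `p`
acting from offset `k`:
`P(p) = diag(I_{k+n-1}, P(π_{n-1})) ⋯ diag(I_{k+1}, P(π₁)) ⋅ diag(I_k, P(π₀))`,
where `diag(I_j, P(π))` swaps indices `j` and `j + π` of `Fin m`. -/
def accPerm (m : ℕ) : List ℕ → ℕ → Matrix (Fin m) (Fin m) ℝ
  | [], _ => 1
  | π :: rest, k => accPerm m rest (k + 1) * swapMat m k (k + π)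

/-- `p` is a valid permutation vector at offset `k` for `m` rows:
its `i`-th entry `π_i` satisfies `k + i + π_i < m`, i.e. `π_i ∈ {0, …, m-(k+i)-1}`. -/
def ValidPivots (m k : ℕ) (p : List ℕ) : Prop :=
  ∀ i : ℕ, ∀ h : i < p.length, k + i + p.get ⟨i, h⟩ < m


lemma accPerm_append_aux (m : ℕ) (pT : List ℕ) : ∀ (pB : List ℕ) (k : ℕ),
    accPerm m (pT ++ pB) k = accPerm m pB (k + pT.length) * accPerm m pT k := by
  induction pT with
  | nil => intro pB k; simp [accPerm]
  | cons π rest ih =>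
    intro pB k
    simp only [List.cons_append, accPerm, List.length_cons]
    rw [ih, mul_assoc,
      show k + (rest.length + 1) = k + 1 + rest.length from by omega]

/-- If the permutation vector `p` is partitioned as `p = (p_T; p_B)`
with `p_T` of size `k`, then `P(p) = diag(I_k, P(p_B)) ⋅ P(p_T)`. -/
theorem accPerm_append (m : ℕ) (pT pB : List ℕ)
    (hT : ValidPivots m 0 pT) (hB : ValidPivots m pT.length pB) :
    accPerm m (pT ++ pB) 0 = accPerm m pB pT.length * accPerm m pT 0 := by
  simpa using accPerm_append_aux m pT pB 0
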